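/- Let q > 0, I ≥ 1, ρ ∈ [0,1], and for x ∈ ℤ set ρ(x) = ρ·q^{(I−1−x) mod I} / (1 − ρ + ρ·q^{(I−1−x) mod I}), and for t ∈ ℤ_{≥0} set ζ(t) = −αρq^{I}q^{t mod J} / (1 − ρ − αρq^{I}q^{t mod J}). With b1(x,t), b2(x,t) as in the unfused higher spin model, the identity ρ(x)·(1 − b1(x,t))·(1 − ζ(t)) = ζ(t)·(1 − b2(x,t))·(1 − ρ(x)) holds for all x ∈ ℤ and t ∈ ℤ_{≥0}. -/

import Mathlib

/-- `β(x,t) = (x mod I) + (t mod J)`. -/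
def betaExp (I J : ℕ) (x : ℤ) (t : ℕ) : ℤ := x % (I : ℤ) + ((t % J : ℕ) : ℤ)

/-- `b1(x,t) = (1 + α q^{β(x,t)+1}) / (1 + α q^{β(x,t)})`. -/
noncomputable def b1f (I J : ℕ) (q α : ℝ) (x : ℤ) (t : ℕ) : ℝ :=
  (1 + α * q ^ (betaExp I J x t + 1)) / (1 + α * q ^ betaExp I J x t)

/-- `b2(x,t) = (α q^{β(x,t)} + q^{-1}) / (1 + α q^{β(x,t)})`. -/
noncomputable def b2f (I J : ℕ) (q α : ℝ) (x : ℤ) (t : ℕ) : ℝ :=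
  (α * q ^ betaExp I J x t + q⁻¹) / (1 + α * q ^ betaExp I J x t)

/-- `ρ(x) = ρ q^{(I-1-x) mod I} / (1 - ρ + ρ q^{(I-1-x) mod I})`. -/
noncomputable def rhoX (I : ℕ) (q ρ : ℝ) (x : ℤ) : ℝ :=
  ρ * q ^ (((I : ℤ) - 1 - x) % (I : ℤ)) / (1 - ρ + ρ * q ^ (((I : ℤ) - 1 - x) % (I : ℤ)))

/-- `ζ(t) = -α ρ q^I q^{t mod J} / (1 - ρ - α ρ q^I q^{t mod J})`. -/
noncomputable def zetaT (I J : ℕ) (q α ρ : ℝ) (t : ℕ) : ℝ :=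
  -α * ρ * q ^ (I : ℤ) * q ^ (((t % J : ℕ) : ℤ)) /
    (1 - ρ - α * ρ * q ^ (I : ℤ) * q ^ (((t % J : ℕ) : ℤ)))

private lemma key_alg (q α ρ P S T : ℝ) (hq : q ≠ 0) (hP : P ≠ 0)
    (hA : 1 + α * (P * S) ≠ 0) (hD1 : 1 - ρ + ρ * (T * P⁻¹ * q⁻¹) ≠ 0)
    (hD2 : 1 - ρ - α * ρ * T * S ≠ 0) :
    ρ * (T * P⁻¹ * q⁻¹) / (1 - ρ + ρ * (T * P⁻¹ * q⁻¹)) *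
        (1 - (1 + α * (P * S * q)) / (1 + α * (P * S))) *
      (1 - -α * ρ * T * S / (1 - ρ - α * ρ * T * S)) =
    -α * ρ * T * S / (1 - ρ - α * ρ * T * S) *
        (1 - (α * (P * S) + q⁻¹) / (1 + α * (P * S))) *
      (1 - ρ * (T * P⁻¹ * q⁻¹) / (1 - ρ + ρ * (T * P⁻¹ * q⁻¹))) := by
  rw [one_sub_div hA, one_sub_div hD2, one_sub_div hA, one_sub_div hD1]
  simp only [div_mul_div_comm]
  rw [div_eq_div_iff (by exact mul_ne_zero (mul_ne_zero hD1 hA) hD2)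
    (by exact mul_ne_zero (mul_ne_zero hD2 hA) hD1)]
  field_simp
  ring

/-- The inhomogeneous local-stationarity identity
`ρ(x) (1 - b1(x,t)) (1 - ζ(t)) = ζ(t) (1 - b2(x,t)) (1 - ρ(x))` for the unfused
stochastic higher spin six vertex model. -/
theorem stmt13 (I J : ℕ) (hI : 1 ≤ I) (hJ : 1 ≤ J) (q α ρ : ℝ) (hq : 0 < q)
    (hρ : ρ ∈ Set.Icc (0:ℝ) 1)
    (hα : (0 ≤ q ∧ q < 1 ∧ α < -q ^ (-(I:ℤ) - (J:ℤ) + 1)) ∨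
          (1 < q ∧ -q ^ (-(I:ℤ) - (J:ℤ) + 1) < α ∧ α < 0)) :
    ∀ (x : ℤ) (t : ℕ),
      rhoX I q ρ x * (1 - b1f I J q α x t) * (1 - zetaT I J q α ρ t)
        = zetaT I J q α ρ t * (1 - b2f I J q α x t) * (1 - rhoX I q ρ x) := by
  obtain ⟨hρ0, hρ1⟩ := hρ
  have hqne : q ≠ 0 := ne_of_gt hq
  have hIpos : (0:ℤ) < I := by exact_mod_cast hI
  intro x t
  set m : ℤ := x % (I:ℤ) with hm
  set s : ℤ := ((t % J : ℕ) : ℤ) with hs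
  have hm0 : 0 ≤ m := Int.emod_nonneg x (ne_of_gt hIpos)
  have hmI : m < I := Int.emod_lt_of_pos x hIpos
  have hs0 : 0 ≤ s := Int.natCast_nonneg _
  have hsJ : s < J := by
    rw [hs]; exact_mod_cast Nat.mod_lt t hJ
  have he : ((I:ℤ)-1-x) % I = (I:ℤ) - 1 - m := by
    have h1 : ((I:ℤ) - 1) % I = (I:ℤ) - 1 := Int.emod_eq_of_lt (by omega) (by omega)
    rw [Int.sub_emod, h1, ← hm]
    exact Int.emod_eq_of_lt (by omega) (by omega)
  have hαneg : α < 0 := by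
    rcases hα with ⟨_, _, h⟩ | ⟨_, _, h⟩
    · have : (0:ℝ) < q ^ (-(I:ℤ) - (J:ℤ) + 1) := zpow_pos hq _
      linarith
    · exact h
  have hA : 1 + α * q ^ (m + s) ≠ 0 := by
    rcases hα with ⟨_, hq1, h⟩ | ⟨hq1, h, _⟩
    · have h1 : q ^ (-(m+s)) ≤ q ^ (-(I:ℤ) - (J:ℤ) + 1) :=
        zpow_le_zpow_right_of_le_one₀ hq (le_of_lt hq1) (by omega)
      have h2 : α < -q ^ (-(m+s)) := lt_of_lt_of_le h (by linarith)
      have h3 : α * q ^ (m+s) < -q ^ (-(m+s)) * q ^ (m+s) :=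
        mul_lt_mul_of_pos_right h2 (zpow_pos hq _)
      have h4 : (-q ^ (-(m+s))) * q ^ (m+s) = -1 := by
        rw [neg_mul, ← zpow_add₀ hqne, neg_add_cancel, zpow_zero]
      intro hc; rw [h4] at h3; linarith
    · have h1 : q ^ ((m+s) + (-(I:ℤ) - (J:ℤ) + 1)) ≤ q ^ (0:ℤ) :=
        zpow_le_zpow_right₀ (le_of_lt hq1) (by omega)
      have h2 : -q ^ ((m+s) + (-(I:ℤ) - (J:ℤ) + 1)) < α * q ^ (m+s) := by
        rw [zpow_add₀ hqne]
        have := mul_lt_mul_of_pos_right h (zpow_pos hq (m+s))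
        calc -(q ^ (m+s) * q ^ (-(I:ℤ) - (J:ℤ) + 1))
            = -q ^ (-(I:ℤ) - (J:ℤ) + 1) * q ^ (m+s) := by ring
          _ < α * q ^ (m+s) := this
      rw [zpow_zero] at h1
      intro hc; linarith
  have hqm : (0:ℝ) < q ^ m := zpow_pos hq m
  have hqs : (0:ℝ) < q ^ s := zpow_pos hq s
  have hqI : (0:ℝ) < q ^ (I:ℤ) := zpow_pos hq _
  have hD1 : (0:ℝ) < 1 - ρ + ρ * q ^ ((I:ℤ) - 1 - m) := by
    have hp : (0:ℝ) < q ^ ((I:ℤ) - 1 - m) := zpow_pos hq _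
    rcases eq_or_lt_of_le hρ0 with h | h
    · rw [← h]; norm_num
    · nlinarith
  have hD2 : (0:ℝ) < 1 - ρ - α * ρ * q ^ (I:ℤ) * q ^ s := by
    rcases eq_or_lt_of_le hρ0 with h | h
    · rw [← h]; norm_num
    · nlinarith [mul_pos hqI hqs, mul_pos (mul_pos (neg_pos.mpr hαneg) h) (mul_pos hqI hqs)]
  have hsplit : q ^ ((I:ℤ) - 1 - m) = q ^ (I:ℤ) * (q ^ m)⁻¹ * q⁻¹ := by
    rw [show (I:ℤ) - 1 - m = (I:ℤ) + (-m) + (-1) by ring, zpow_add₀ hqne, zpow_add₀ hqne,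
      zpow_neg, zpow_neg, zpow_one]
  have hms : q ^ (m + s) = q ^ m * q ^ s := zpow_add₀ hqne m s
  have hms1 : q ^ (m + s + 1) = q ^ m * q ^ s * q := by
    rw [zpow_add₀ hqne, hms, zpow_one]
  have hbeta : betaExp I J x t = m + s := rfl
  rw [hms] at hA
  rw [hsplit] at hD1
  have hd1 := hD1.ne'
  have hd2 := hD2.ne'
  have hqmne := hqm.ne'
  have hqIne := hqI.ne'
  have hqsne := hqs.ne'
  simp only [b1f, b2f, rhoX, zetaT, hbeta, he, ← hs, hsplit, hms, hms1]
  exact key_alg q α ρ (q ^ m) (q ^ s) (q ^ (I:ℤ)) hqne hqmne hA hd1 hd2
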